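/- If a class of graphs has the strong Erdős–Hajnal property then it has the Erdős–Hajnal property: if there exists ε > 0 such that every graph G in a hereditary class 𝒢 with |V(G)| > 1 has disjoint sets A, B with |A|, |B| ≥ ε|V(G)| and A complete or anticomplete to B, then there exists c > 0 such that max{α(G), ω(G)} ≥ |V(G)|^c for every G ∈ 𝒢. -/

import Mathlib

open SimpleGraph

/-- Sets `A`, `B` are complete to each other: disjoint with all edges between them. -/
def Complete {V : Type} (G : SimpleGraph V) (A B : Set V) : Prop :=
  Disjoint A B ∧ ∀ a ∈ A, ∀ b ∈ B, G.Adj a b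

/-- Sets `A`, `B` are anticomplete: disjoint with no edges between them. -/
def Anticomplete {V : Type} (G : SimpleGraph V) (A B : Set V) : Prop :=
  Disjoint A B ∧ ∀ a ∈ A, ∀ b ∈ B, ¬ G.Adj a b

/-- `V1 = N(u) \ N[v]`. -/
def sideA {V : Type} (G : SimpleGraph V) (u v : V) : Set V :=
  G.neighborSet u \ insert v (G.neighborSet v)

/-- `V2 = N(v) \ N[u]`. -/
def sideB {V : Type} (G : SimpleGraph V) (u v : V) : Set V :=
  G.neighborSet v \ insert u (G.neighborSet u)

/-- `V3 = N(u) ∩ N(v)`. -/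
def sideC {V : Type} (G : SimpleGraph V) (u v : V) : Set V :=
  G.neighborSet u ∩ G.neighborSet v

/-- The pair `{a, b}` crosses one of the three pairs of sets `(V1,V2)`, `(V2,V3)`, `(V1,V3)`. -/
def pivotCross {V : Type} (G : SimpleGraph V) (u v a b : V) : Prop :=
  (a ∈ sideA G u v ∧ b ∈ sideB G u v) ∨ (a ∈ sideB G u v ∧ b ∈ sideA G u v) ∨
  (a ∈ sideB G u v ∧ b ∈ sideC G u v) ∨ (a ∈ sideC G u v ∧ b ∈ sideB G u v) ∨
  (a ∈ sideA G u v ∧ b ∈ sideC G u v) ∨ (a ∈ sideC G u v ∧ b ∈ sideA G u v)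

lemma pivotCross_comm {V : Type} {G : SimpleGraph V} {u v a b : V} :
    pivotCross G u v a b ↔ pivotCross G u v b a := by
  unfold pivotCross; tauto

/-- The pivot `G ∧ uv`: complement the edges between each of the pairs `(V1,V2)`, `(V2,V3)`,
`(V1,V3)` and then swap the labels of `u` and `v`. -/
def pivotGraph {V : Type} (G : SimpleGraph V) (u v : V) : SimpleGraph V :=
  letI := Classical.decEq V
  { Adj := fun x y => x ≠ y ∧
      Xor' (G.Adj (Equiv.swap u v x) (Equiv.swap u v y))
        (pivotCross G u v (Equiv.swap u v x) (Equiv.swap u v y)),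
    symm := ⟨by
      rintro x y ⟨hxy, h⟩
      refine ⟨hxy.symm, ?_⟩
      have h1 : G.Adj (Equiv.swap u v x) (Equiv.swap u v y) ↔
          G.Adj (Equiv.swap u v y) (Equiv.swap u v x) := G.adj_comm _ _
      have h2 : pivotCross G u v (Equiv.swap u v x) (Equiv.swap u v y) ↔
          pivotCross G u v (Equiv.swap u v y) (Equiv.swap u v x) := pivotCross_comm
      unfold Xor' Xor at h ⊢
      tauto⟩,
    loopless := ⟨fun _ h => h.1 rfl⟩ }

/-- `H` is a pivot-minor of `G`: `H` is obtainable from `G` (up to isomorphism) by a sequence of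
vertex deletions and pivots of edges. -/
inductive IsPivotMinor : ∀ {W U : Type}, SimpleGraph W → SimpleGraph U → Prop
  | of_iso {W U : Type} {H : SimpleGraph W} {G : SimpleGraph U} :
      Nonempty (H ≃g G) → IsPivotMinor H G
  | pivot {W U : Type} {H : SimpleGraph W} {G : SimpleGraph U} (u v : U) :
      G.Adj u v → IsPivotMinor H (pivotGraph G u v) → IsPivotMinor H G
  | delete {W U : Type} {H : SimpleGraph W} {G : SimpleGraph U} (s : Set U) :
      IsPivotMinor H (G.induce s) → IsPivotMinor H G

/-- `G` is obtained from `H` by replacing each edge `uv` of `H` with a path whose length satisfies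
`P u v h`: there are internally disjoint induced paths of `G` joining the images of the branch
vertices, covering all of `G`, whose edges are exactly the edges of `G`. -/
def IsEdgeReplacement {U W : Type} (H : SimpleGraph U)
    (P : ∀ u v : U, H.Adj u v → ℕ → Prop) (G : SimpleGraph W) : Prop :=
  ∃ (x : U ↪ W) (p : ∀ u v : U, H.Adj u v → G.Walk (x u) (x v)),
    (∀ u v h, (p u v h).IsPath) ∧
    (∀ u v h, P u v h (p u v h).length) ∧
    (∀ u v h, p v u h.symm = (p u v h).reverse) ∧
    (∀ u v h w, w ∈ (p u v h).support → w ∈ Set.range x → w = x u ∨ w = x v) ∧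
    (∀ u v h k l h', s(u, v) ≠ s(k, l) →
      ∀ w, w ∈ (p u v h).support → w ∈ (p k l h').support → w ∈ Set.range x) ∧
    (∀ w : W, w ∈ Set.range x ∨ ∃ u v h, w ∈ (p u v h).support) ∧
    (∀ a b : W, G.Adj a b ↔ ∃ u v h, (p u v h).toSubgraph.Adj a b)

/-- `G` is obtained from `H` by replacing each edge with a path whose length satisfies `P`. -/
def IsSubdivisionWith {U W : Type} (H : SimpleGraph U) (P : ℕ → Prop) (G : SimpleGraph W) : Prop :=
  IsEdgeReplacement H (fun _ _ _ n => P n) G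

/-- An `F`-filleting of `G`: subdivide (at least once) every edge of `G` not in `F`, and do not
subdivide the edges of `F`. -/
def IsFilleting {U W : Type} (G F : SimpleGraph U) (H : SimpleGraph W) : Prop :=
  IsEdgeReplacement G (fun u v _ n => (F.Adj u v ∧ n = 1) ∨ (¬ F.Adj u v ∧ 2 ≤ n)) H

/-- Join of `H` with a single new vertex (`H + K_1`), the new vertex being `none`. -/
def addApex {W : Type} (H : SimpleGraph W) : SimpleGraph (Option W) :=
  SimpleGraph.fromRel fun a b =>
    a = none ∨ ∃ u v : W, a = some u ∧ b = some v ∧ H.Adj u v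

/-- `F` with ends `a`, `b` is a fuzzy odd path (with length satisfying `P`): it consists of an odd
path from `a` to `b` through all the vertices, possibly together with one extra edge `xy` between
two internal vertices such that `xy` lies in a triangle. -/
def IsFuzzyOddPath {T : Type} (F : SimpleGraph T) (a b : T) (P : ℕ → Prop) : Prop :=
  ∃ p : F.Walk a b, p.IsPath ∧ Odd p.length ∧ P p.length ∧ (∀ t : T, t ∈ p.support) ∧
    ((∀ c d : T, F.Adj c d ↔ p.toSubgraph.Adj c d) ∨
      ∃ x y : T, x ∈ p.support ∧ y ∈ p.support ∧ x ≠ a ∧ x ≠ b ∧ y ≠ a ∧ y ≠ b ∧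
        F.Adj x y ∧ ¬ p.toSubgraph.Adj x y ∧ (∃ z : T, F.Adj x z ∧ F.Adj y z) ∧
        (∀ c d : T, F.Adj c d ↔ (p.toSubgraph.Adj c d ∨ (c = x ∧ d = y) ∨ (c = y ∧ d = x))))

/-- `G` is a proper fuzzy odd subdivision of `H`: `G` is obtained from `H` by replacing each edge
with a fuzzy odd path of (odd) length at least `3`. -/
def IsProperFuzzyOddSubdivision {U W : Type} (H : SimpleGraph U) (G : SimpleGraph W) : Prop :=
  ∃ (x : U ↪ W) (S : ∀ u v : U, H.Adj u v → Set W)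
    (hS : ∀ u v h, x u ∈ S u v h ∧ x v ∈ S u v h),
    (∀ u v h, S v u h.symm = S u v h) ∧
    (∀ u v h w, w ∈ S u v h → w ∈ Set.range x → w = x u ∨ w = x v) ∧
    (∀ u v h k l h', s(u, v) ≠ s(k, l) → ∀ w, w ∈ S u v h → w ∈ S k l h' → w ∈ Set.range x) ∧
    (∀ w : W, w ∈ Set.range x ∨ ∃ u v h, w ∈ S u v h) ∧
    (∀ a b : W, G.Adj a b → ∃ u v h, a ∈ S u v h ∧ b ∈ S u v h) ∧
    (∀ u v h, IsFuzzyOddPath (G.induce (S u v h))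
      ⟨x u, (hS u v h).1⟩ ⟨x v, (hS u v h).2⟩ (fun n => 3 ≤ n))

/-- A mass on a graph `G`. -/
structure IsMass {V : Type} (G : SimpleGraph V) (μ : Set V → ℝ) : Prop where
  map_empty : μ ∅ = 0
  map_univ : μ Set.univ = 1
  mono : ∀ ⦃X Y : Set V⦄, X ⊆ Y → μ X ≤ μ Y
  subadditive : ∀ X Y : Set V, μ (X ∪ Y) ≤ μ X + μ Y

/-- `N^r[v]`: the ball of radius `r` about `v`. -/
def ball {V : Type} (G : SimpleGraph V) (v : V) (r : ℕ) : Set V :=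
  {w | ∃ p : G.Walk v w, p.length ≤ r}

/-- `(G, μ)` is `ε`-coherent. -/
def EpsCoherent {V : Type} (G : SimpleGraph V) (μ : Set V → ℝ) (ε : ℝ) : Prop :=
  (∀ v : V, μ {v} < ε) ∧ (∀ v : V, μ (G.neighborSet v) < ε) ∧
  ∀ A B : Set V, Anticomplete G A B → min (μ A) (μ B) < ε

/-- `(G, μ)` is `(ε, r)`-coherent. -/
def EpsRCoherent {V : Type} (G : SimpleGraph V) (μ : Set V → ℝ) (ε : ℝ) (r : ℕ) : Prop :=
  (∀ v : V, μ (_root_.ball G v r) < ε) ∧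
  ∀ A B : Set V, Anticomplete G A B → min (μ A) (μ B) < ε

/-- `(G, μ)` is `(δ, r)`-focused. -/
def Focused {V : Type} (G : SimpleGraph V) (μ : Set V → ℝ) (δ : ℝ) (r : ℕ) : Prop :=
  ∀ Z : Set V, δ ≤ μ Z → ∃ v : Z, μ Z / 2 ≤ μ (Subtype.val '' _root_.ball (G.induce Z) v r)

/-- `N[X]`. -/
def closedNbhd {V : Type} (G : SimpleGraph V) (X : Set V) : Set V :=
  X ∪ {w | ∃ a ∈ X, G.Adj a w}

/-- `x` is an `r`-centre of `X`: every vertex of `X` is within distance `r` of `x` in `G[X]`. -/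
def IsCentre {V : Type} (G : SimpleGraph V) (X : Set V) (x : V) (hx : x ∈ X) (r : ℕ) : Prop :=
  ∀ y : X, ∃ p : (G.induce X).Walk ⟨x, hx⟩ y, p.length ≤ r

/-- A leaf: a vertex of degree at most 1. -/
def IsLeaf {V : Type} (G : SimpleGraph V) (v : V) : Prop := (G.neighborSet v).Subsingleton

/-- `P` is a path graph. -/
def IsPathGraph {U : Type} (P : SimpleGraph U) : Prop :=
  ∃ (a b : U) (w : P.Walk a b), w.IsPath ∧ (∀ u : U, u ∈ w.support) ∧
    ∀ x y : U, P.Adj x y ↔ w.toSubgraph.Adj x y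

/-- A caterpillar: a tree `T` such that `T − L(T)` is a path. -/
def IsCaterpillar {U : Type} (T : SimpleGraph U) : Prop :=
  T.IsTree ∧ IsPathGraph (T.induce {v | ¬ IsLeaf T v})

/-- Disjoint union of `q` stars, each with `p` leaves: `(i, none)` is the centre of the `i`-th
star and `(i, some j)` its leaves. -/
def starForest (q p : ℕ) : SimpleGraph (Fin q × Option (Fin p)) :=
  SimpleGraph.fromRel fun a b => a.1 = b.1 ∧ a.2 = none ∧ b.2 ≠ none

/-- The clique number `ω(G)`. -/
noncomputable def cliqueNumber {V : Type} [Fintype V] (G : SimpleGraph V) : ℕ :=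
  sSup {n | ∃ s : Finset V, G.IsNClique n s}

/-- The independence number `α(G)`. -/
noncomputable def indepNumber {V : Type} [Fintype V] (G : SimpleGraph V) : ℕ :=
  cliqueNumber Gᶜ

section EHaux

variable {V : Type} [Fintype V]

lemma cliqueSet_bddAbove (G : SimpleGraph V) :
    BddAbove {n | ∃ s : Finset V, G.IsNClique n s} := by
  refine ⟨Fintype.card V, ?_⟩
  rintro n ⟨s, hs⟩
  exact hs.2 ▸ s.card_le_univ

lemma le_cliqueNumber {G : SimpleGraph V} {n : ℕ} {s : Finset V}
    (h : G.IsNClique n s) : n ≤ cliqueNumber G :=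
  le_csSup (cliqueSet_bddAbove G) ⟨s, h⟩

lemma exists_clique (G : SimpleGraph V) : ∃ s, G.IsNClique (cliqueNumber G) s := by
  have h0 : (0:ℕ) ∈ {n | ∃ s : Finset V, G.IsNClique n s} := ⟨∅, by simp⟩
  exact Nat.sSup_mem ⟨0, h0⟩ (cliqueSet_bddAbove G)

lemma one_le_cliqueNumber [Nonempty V] (G : SimpleGraph V) : 1 ≤ cliqueNumber G := by
  obtain ⟨v⟩ := ‹Nonempty V›
  exact le_cliqueNumber (s := {v}) (by simp)

lemma cliqueNumber_le_of_emb {W : Type} [Fintype W] {H : SimpleGraph V}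
    {G : SimpleGraph W} (f : H ↪g G) : cliqueNumber H ≤ cliqueNumber G := by
  obtain ⟨s, hs⟩ := exists_clique H
  refine le_cliqueNumber (s := s.map f.toEmbedding) ⟨?_, by simp [hs.2]⟩
  intro a ha b hb hab
  simp only [Finset.coe_map, Set.mem_image] at ha hb
  obtain ⟨x, hx, rfl⟩ := ha
  obtain ⟨y, hy, rfl⟩ := hb
  exact f.map_adj_iff.2 (hs.1 hx hy (fun h => hab (congrArg f h)))

omit [Fintype V] in
lemma compl_induce (G : SimpleGraph V) (A : Set V) :
    (G.induce A)ᶜ = Gᶜ.induce A := by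
  ext a b
  simp only [SimpleGraph.compl_adj, SimpleGraph.comap_adj,
    Function.Embedding.coe_subtype, ne_eq, Subtype.ext_iff]

lemma cliqueNumber_add_le {G : SimpleGraph V} {A B : Set V}
    [Fintype A] [Fintype B] (h : Complete G A B) :
    cliqueNumber (G.induce A) + cliqueNumber (G.induce B) ≤ cliqueNumber G := by
  classical
  obtain ⟨s, hs⟩ := exists_clique (G.induce A)
  obtain ⟨t, ht⟩ := exists_clique (G.induce B)
  set s' : Finset V := s.map (Function.Embedding.subtype _) with hs'def
  set t' : Finset V := t.map (Function.Embedding.subtype _) with ht'def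
  have hmemA : ∀ x ∈ s', x ∈ A := by
    intro x hx
    simp only [hs'def, Finset.mem_map, Function.Embedding.coe_subtype] at hx
    obtain ⟨⟨y, hy⟩, _, rfl⟩ := hx
    exact hy
  have hmemB : ∀ x ∈ t', x ∈ B := by
    intro x hx
    simp only [ht'def, Finset.mem_map, Function.Embedding.coe_subtype] at hx
    obtain ⟨⟨y, hy⟩, _, rfl⟩ := hx
    exact hy
  have hdisj : Disjoint s' t' := by
    rw [Finset.disjoint_left]
    intro x hx hx'
    exact Set.disjoint_left.1 h.1 (hmemA x hx) (hmemB x hx')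
  refine le_cliqueNumber (s := s' ∪ t') ⟨?_, ?_⟩
  · intro x hx y hy hxy
    simp only [Finset.coe_union, Set.mem_union] at hx hy
    rcases hx with hx | hx <;> rcases hy with hy | hy
    · simp only [hs'def, Finset.mem_coe, Finset.mem_map,
        Function.Embedding.coe_subtype] at hx hy
      obtain ⟨a, ha, rfl⟩ := hx
      obtain ⟨b, hb, rfl⟩ := hy
      exact hs.1 ha hb (fun hh => hxy (congrArg _ hh))
    · exact h.2 x (hmemA x hx) y (hmemB y hy)
    · exact (h.2 y (hmemA y hy) x (hmemB x hx)).symm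
    · simp only [ht'def, Finset.mem_coe, Finset.mem_map,
        Function.Embedding.coe_subtype] at hx hy
      obtain ⟨a, ha, rfl⟩ := hx
      obtain ⟨b, hb, rfl⟩ := hy
      exact ht.1 ha hb (fun hh => hxy (congrArg _ hh))
  · rw [Finset.card_union_of_disjoint hdisj]
    simp [hs'def, ht'def, hs.2, ht.2]

end EHaux

/-- the strong Erdős–Hajnal property implies the Erdős–Hajnal property for
hereditary classes. -/
theorem strongEH_implies_EH (𝒢 : ∀ ⦃V : Type⦄, SimpleGraph V → Prop)
    (hered : ∀ {V W : Type} (G : SimpleGraph V) (H : SimpleGraph W),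
      𝒢 G → Nonempty (H ↪g G) → 𝒢 H)
    (ε : ℝ) (hε : 0 < ε)
    (hSEH : ∀ (V : Type) [Fintype V] (G : SimpleGraph V), 𝒢 G → 1 < Fintype.card V →
      ∃ A B : Set V, ε * (Fintype.card V : ℝ) ≤ (A.ncard : ℝ) ∧
        ε * (Fintype.card V : ℝ) ≤ (B.ncard : ℝ) ∧
        (Complete G A B ∨ Anticomplete G A B)) :
    ∃ c : ℝ, 0 < c ∧ ∀ (V : Type) [Fintype V] (G : SimpleGraph V), 𝒢 G →
      (Fintype.card V : ℝ) ^ c ≤ ((max (indepNumber G) (cliqueNumber G) : ℕ) : ℝ) := by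
  classical
  set ε' : ℝ := min ε (1/2) with hε'def
  have hε'0 : 0 < ε' := lt_min hε (by norm_num)
  have hε'le : ε' ≤ 1/2 := min_le_right _ _
  have hε'lt1 : ε' < 1 := lt_of_le_of_lt hε'le (by norm_num)
  have hlogneg : Real.log ε' < 0 := Real.log_neg hε'0 hε'lt1
  set c₀ : ℝ := Real.log 2 / (-Real.log ε') with hc₀def
  have hc₀ : 0 < c₀ := div_pos (Real.log_pos (by norm_num)) (by linarith)
  have hpow : ε' ^ c₀ = 1/2 := by
    rw [Real.rpow_def_of_pos hε'0, hc₀def]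
    rw [show Real.log ε' * (Real.log 2 / (-Real.log ε')) = -Real.log 2 by
      field_simp [ne_of_lt hlogneg]]
    rw [Real.exp_neg, Real.exp_log (by norm_num)]
    norm_num
  -- key product bound by strong induction
  have key : ∀ n : ℕ, ∀ (V : Type) (_ : Fintype V) (G : SimpleGraph V), 𝒢 G →
      Fintype.card V = n →
      (n : ℝ) ^ c₀ ≤ ((indepNumber G * cliqueNumber G : ℕ) : ℝ) := by
    intro n
    induction n using Nat.strong_induction_on with
    | _ n IH =>
      intro V instV G hG hcard
      rcases Nat.lt_or_ge n 2 with hn2 | hn2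
      · interval_cases n
        · rw [Nat.cast_zero, Real.zero_rpow (ne_of_gt hc₀)]
          positivity
        · rw [Nat.cast_one, Real.one_rpow]
          haveI : Nonempty V := Fintype.card_pos_iff.mp (by omega)
          have hα : 1 ≤ indepNumber G := one_le_cliqueNumber Gᶜ
          have hω : 1 ≤ cliqueNumber G := one_le_cliqueNumber G
          exact_mod_cast Nat.one_le_iff_ne_zero.mpr (Nat.mul_ne_zero (by omega) (by omega))
      · obtain ⟨A, B, hA, hB, hcase⟩ := hSEH V G hG (by omega)
        rw [hcard] at hA hB
        have hnn : (0:ℝ) ≤ (n:ℝ) := Nat.cast_nonneg n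
        have hA' : ε' * n ≤ (A.ncard : ℝ) :=
          le_trans (mul_le_mul_of_nonneg_right (min_le_left _ _) hnn) hA
        have hB' : ε' * n ≤ (B.ncard : ℝ) :=
          le_trans (mul_le_mul_of_nonneg_right (min_le_left _ _) hnn) hB
        have hεn : (0:ℝ) < ε' * n := by
          have : (0:ℝ) < (n:ℝ) := by exact_mod_cast Nat.lt_of_lt_of_le Nat.zero_lt_two hn2
          positivity
        haveI : Fintype ↥A := (Set.toFinite A).fintype
        haveI : Fintype ↥B := (Set.toFinite B).fintype
        have hcardA : (Fintype.card ↥A : ℕ) = A.ncard := (Set.ncard_eq_toFinset_card' A ▸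
          (Set.toFinset_card A)).symm
        have hcardB : (Fintype.card ↥B : ℕ) = B.ncard := (Set.ncard_eq_toFinset_card' B ▸
          (Set.toFinset_card B)).symm
        have hdisj : Disjoint A B := hcase.elim And.left And.left
        have hBne : B.Nonempty := by
          rw [← Set.ncard_pos (Set.toFinite B)]
          rcases Nat.eq_zero_or_pos B.ncard with h | h
          · rw [h] at hB'; push_cast at hB'; linarith
          · exact h
        have hAne : A.Nonempty := by
          rw [← Set.ncard_pos (Set.toFinite A)]
          rcases Nat.eq_zero_or_pos A.ncard with h | h
          · rw [h] at hA'; push_cast at hA'; linarith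
          · exact h
        have hAlt : A.ncard < n := by
          obtain ⟨b, hb⟩ := hBne
          have hbA : b ∉ A := fun hbA => Set.disjoint_left.1 hdisj hbA hb
          have : A ⊂ Set.univ := ⟨Set.subset_univ A, fun hsub => hbA (hsub trivial)⟩
          have := Set.ncard_lt_ncard this Set.finite_univ
          rwa [Set.ncard_univ, Nat.card_eq_fintype_card, hcard] at this
        have hBlt : B.ncard < n := by
          obtain ⟨a, ha⟩ := hAne
          have haB : a ∉ B := fun haB => Set.disjoint_right.1 hdisj haB ha
          have : B ⊂ Set.univ := ⟨Set.subset_univ B, fun hsub => haB (hsub trivial)⟩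
          have := Set.ncard_lt_ncard this Set.finite_univ
          rwa [Set.ncard_univ, Nat.card_eq_fintype_card, hcard] at this
        have hGA : 𝒢 (G.induce A) := hered G _ hG ⟨SimpleGraph.Embedding.induce A⟩
        have hGB : 𝒢 (G.induce B) := hered G _ hG ⟨SimpleGraph.Embedding.induce B⟩
        have IHA := IH A.ncard hAlt ↥A _ (G.induce A) hGA hcardA
        have IHB := IH B.ncard hBlt ↥B _ (G.induce B) hGB hcardB
        set αA := indepNumber (G.induce A)
        set ωA := cliqueNumber (G.induce A)
        set αB := indepNumber (G.induce B)
        set ωB := cliqueNumber (G.induce B)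
        set α := indepNumber G
        set ω := cliqueNumber G
        -- (ε' n) ^ c₀ = n ^ c₀ / 2
        have hsplit : ((ε' * n : ℝ)) ^ c₀ = (n:ℝ) ^ c₀ / 2 := by
          rw [Real.mul_rpow (le_of_lt hε'0) hnn, hpow]; ring
        have hArp : (n:ℝ) ^ c₀ / 2 ≤ (A.ncard : ℝ) ^ c₀ := by
          rw [← hsplit]
          exact Real.rpow_le_rpow (le_of_lt hεn) hA' (le_of_lt hc₀)
        have hBrp : (n:ℝ) ^ c₀ / 2 ≤ (B.ncard : ℝ) ^ c₀ := by
          rw [← hsplit]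
          exact Real.rpow_le_rpow (le_of_lt hεn) hB' (le_of_lt hc₀)
        have hIA : (n:ℝ) ^ c₀ / 2 ≤ (αA : ℝ) * (ωA : ℝ) := by
          refine le_trans hArp ?_
          calc ((A.ncard : ℕ) : ℝ) ^ c₀ ≤ ((αA * ωA : ℕ) : ℝ) := IHA
            _ = (αA : ℝ) * (ωA : ℝ) := by push_cast; ring
        have hIB : (n:ℝ) ^ c₀ / 2 ≤ (αB : ℝ) * (ωB : ℝ) := by
          refine le_trans hBrp ?_
          calc ((B.ncard : ℕ) : ℝ) ^ c₀ ≤ ((αB * ωB : ℕ) : ℝ) := IHB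
            _ = (αB : ℝ) * (ωB : ℝ) := by push_cast; ring
        -- monotonicity facts
        have hωA : ωA ≤ ω := cliqueNumber_le_of_emb (SimpleGraph.Embedding.induce A)
        have hωB : ωB ≤ ω := cliqueNumber_le_of_emb (SimpleGraph.Embedding.induce B)
        have hαA : αA ≤ α := by
          show cliqueNumber (G.induce A)ᶜ ≤ cliqueNumber Gᶜ
          rw [compl_induce]
          exact cliqueNumber_le_of_emb (SimpleGraph.Embedding.induce A)
        have hαB : αB ≤ α := by
          show cliqueNumber (G.induce B)ᶜ ≤ cliqueNumber Gᶜ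
          rw [compl_induce]
          exact cliqueNumber_le_of_emb (SimpleGraph.Embedding.induce B)
        have hgoal : (n:ℝ) ^ c₀ ≤ (α : ℝ) * (ω : ℝ) := by
          rcases hcase with hC | hAnti
          · -- complete: ω ≥ ωA + ωB
            have hsum : ωA + ωB ≤ ω := cliqueNumber_add_le hC
            calc (n:ℝ) ^ c₀ = (n:ℝ) ^ c₀ / 2 + (n:ℝ) ^ c₀ / 2 := by ring
              _ ≤ (αA : ℝ) * ωA + (αB : ℝ) * ωB := add_le_add hIA hIB
              _ ≤ (α : ℝ) * ωA + (α : ℝ) * ωB := by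
                  have h1 : (αA : ℝ) ≤ α := by exact_mod_cast hαA
                  have h2 : (αB : ℝ) ≤ α := by exact_mod_cast hαB
                  have := mul_le_mul_of_nonneg_right h1 (by positivity : (0:ℝ) ≤ (ωA:ℝ))
                  have := mul_le_mul_of_nonneg_right h2 (by positivity : (0:ℝ) ≤ (ωB:ℝ))
                  gcongr
              _ = (α : ℝ) * ((ωA : ℝ) + ωB) := by ring
              _ ≤ (α : ℝ) * ω := by
                  have : ((ωA : ℝ) + ωB) ≤ ω := by exact_mod_cast hsum
                  exact mul_le_mul_of_nonneg_left this (by positivity)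
          · -- anticomplete: α ≥ αA + αB
            have hC' : Complete Gᶜ A B := by
              refine ⟨hAnti.1, fun a ha b hb => ?_⟩
              rw [SimpleGraph.compl_adj]
              exact ⟨fun hab => Set.disjoint_left.1 hAnti.1 ha (hab ▸ hb),
                hAnti.2 a ha b hb⟩
            have hsum : αA + αB ≤ α := by
              have := cliqueNumber_add_le (G := Gᶜ) hC'
              rwa [← compl_induce, ← compl_induce] at this
            calc (n:ℝ) ^ c₀ = (n:ℝ) ^ c₀ / 2 + (n:ℝ) ^ c₀ / 2 := by ring
              _ ≤ (αA : ℝ) * ωA + (αB : ℝ) * ωB := add_le_add hIA hIB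
              _ ≤ (αA : ℝ) * ω + (αB : ℝ) * ω := by
                  have h1 : (ωA : ℝ) ≤ ω := by exact_mod_cast hωA
                  have h2 : (ωB : ℝ) ≤ ω := by exact_mod_cast hωB
                  gcongr
              _ = ((αA : ℝ) + αB) * ω := by ring
              _ ≤ (α : ℝ) * ω := by
                  have : ((αA : ℝ) + αB) ≤ α := by exact_mod_cast hsum
                  exact mul_le_mul_of_nonneg_right this (by positivity)
        calc (n:ℝ) ^ c₀ ≤ (α : ℝ) * (ω : ℝ) := hgoal
          _ = ((α * ω : ℕ) : ℝ) := by push_cast; ring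
  -- conclude with c = c₀ / 2
  refine ⟨c₀ / 2, by positivity, ?_⟩
  intro V instV G hG
  set n := Fintype.card V with hn
  set M : ℕ := max (indepNumber G) (cliqueNumber G) with hM
  have hkey := key n V instV G hG rfl
  have hprod : ((indepNumber G * cliqueNumber G : ℕ) : ℝ) ≤ (M : ℝ) * (M : ℝ) := by
    have h1 : indepNumber G ≤ M := le_max_left _ _
    have h2 : cliqueNumber G ≤ M := le_max_right _ _
    have : indepNumber G * cliqueNumber G ≤ M * M := Nat.mul_le_mul h1 h2
    calc ((indepNumber G * cliqueNumber G : ℕ) : ℝ) ≤ ((M * M : ℕ) : ℝ) := by exact_mod_cast this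
      _ = (M : ℝ) * (M : ℝ) := by push_cast; ring
  rcases Nat.eq_zero_or_pos n with h0 | hpos
  · rw [h0]
    rw [Nat.cast_zero, Real.zero_rpow (by positivity : c₀ / 2 ≠ 0)]
    positivity
  · have hn0 : (0:ℝ) < (n:ℝ) := by exact_mod_cast hpos
    have hsq : ((n:ℝ) ^ (c₀/2)) ^ 2 ≤ (M : ℝ) ^ 2 := by
      have : ((n:ℝ) ^ (c₀/2)) ^ 2 = (n:ℝ) ^ c₀ := by
        rw [← Real.rpow_natCast ((n:ℝ) ^ (c₀/2)) 2, ← Real.rpow_mul (le_of_lt hn0)]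
        norm_num
      rw [this]
      calc (n:ℝ) ^ c₀ ≤ ((indepNumber G * cliqueNumber G : ℕ) : ℝ) := hkey
        _ ≤ (M : ℝ) * (M : ℝ) := hprod
        _ = (M : ℝ) ^ 2 := by ring
    exact (pow_le_pow_iff_left₀ (Real.rpow_nonneg hn0.le _) (by positivity) two_ne_zero).1 hsq
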